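/- Let h : ℝ² → ℝ be continuous. Then for all x ∈ ℝ², h(x) = div_x [∫₀¹ h(ξx) ξ x dξ], where the divergence is taken with respect to x (Poincaré Lemma for vector fields in the plane), provided h is C¹. -/

import Mathlib

set_option maxHeartbeats 1000000

open MeasureTheory Metric intervalIntegral

/-- The planar divergence of a vector field `F : ℝ² → ℝ²`. -/
noncomputable def div2 (F : ℝ × ℝ → ℝ × ℝ) (x : ℝ × ℝ) : ℝ :=
  (fderiv ℝ F x (1, 0)).1 + (fderiv ℝ F x (0, 1)).2

/-- Poincaré Lemma for vector fields in the plane: for `h : ℝ² → ℝ` of class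
`C¹`, `h(x) = div [∫₀¹ h(ξ x) ξ x dξ]` for all `x`. -/
theorem poincare_lemma_vector_field
    (h : ℝ × ℝ → ℝ) (hC1 : ContDiff ℝ 1 h) :
    ∀ x : ℝ × ℝ,
      div2 (fun y => ∫ ξ in (0:ℝ)..1, (ξ * h (ξ • y)) • y) x = h x := by
  intro x
  have hd : Differentiable ℝ h := hC1.differentiable one_ne_zero
  have hcont : Continuous h := hC1.continuous
  have hDcont : Continuous (fun y => fderiv ℝ h y) :=
    (hC1.fderiv_right (m := 0) le_rfl).continuous
  -- bound on the derivative on a compact set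
  obtain ⟨M, hM⟩ : ∃ M, ∀ y ∈ closedBall (0 : ℝ × ℝ) (‖x‖ + 1), ‖fderiv ℝ h y‖ ≤ M :=
    (isCompact_closedBall _ _).exists_bound_of_continuousOn hDcont.continuousOn.norm |>.imp
      fun M hM y hy => by simpa using hM y hy
  -- the parametric derivative
  set F' : ℝ × ℝ → ℝ → (ℝ × ℝ) →L[ℝ] ℝ := fun y t => (t ^ 2) • fderiv ℝ h (t • y) with hF'
  have hdiff : ∀ t : ℝ, ∀ y : ℝ × ℝ,
      HasFDerivAt (fun z => t * h (t • z)) (F' y t) y := by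
    intro t y
    have h1 : HasFDerivAt (fun z : ℝ × ℝ => t • z)
        (t • ContinuousLinearMap.id ℝ (ℝ × ℝ)) y :=
      (hasFDerivAt_id y).const_smul t
    have h2 : HasFDerivAt (fun z => h (t • z))
        ((fderiv ℝ h (t • y)).comp (t • ContinuousLinearMap.id ℝ (ℝ × ℝ))) y :=
      (hd (t • y)).hasFDerivAt.comp y h1
    have h3 := h2.const_mul t
    have heq : F' y t
        = t • (fderiv ℝ h (t • y)).comp (t • ContinuousLinearMap.id ℝ (ℝ × ℝ)) := by
      apply ContinuousLinearMap.ext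
      intro v
      simp [hF', pow_two]
      ring
    rw [heq]
    exact h3
  have hkey : HasFDerivAt (fun y => ∫ t in (0:ℝ)..1, t * h (t • y))
      (∫ t in (0:ℝ)..1, F' x t) x := by
    apply intervalIntegral.hasFDerivAt_integral_of_dominated_of_fderiv_le
      (s := ball x 1) (bound := fun _ => |M|) (ball_mem_nhds x one_pos)
    · filter_upwards with y
      exact (continuous_id.mul (hcont.comp (continuous_id.smul
        continuous_const))).aestronglyMeasurable
    · apply Continuous.intervalIntegrable
      exact continuous_id.mul (hcont.comp (continuous_id.smul continuous_const))
    · apply Continuous.aestronglyMeasurable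
      exact (continuous_pow 2).smul (hDcont.comp (continuous_id.smul continuous_const))
    · filter_upwards with t ht y hy
      have ht' : t ∈ Set.Ioc (0:ℝ) 1 := by
        simpa [Set.uIoc_of_le (zero_le_one : (0:ℝ) ≤ 1)] using ht
      have hmem : t • y ∈ closedBall (0 : ℝ × ℝ) (‖x‖ + 1) := by
        rw [mem_closedBall, dist_zero_right, norm_smul]
        have hy' : ‖y‖ ≤ ‖x‖ + 1 := by
          have := mem_ball_iff_norm.mp hy
          calc ‖y‖ ≤ ‖y - x‖ + ‖x‖ := by simpa using norm_add_le (y - x) x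
            _ ≤ ‖x‖ + 1 := by linarith
        calc ‖t‖ * ‖y‖ ≤ 1 * (‖x‖ + 1) := by
              apply mul_le_mul _ hy' (norm_nonneg _)
                (by positivity)
              rw [Real.norm_eq_abs, abs_le]; constructor <;> linarith [ht'.1, ht'.2]
          _ = ‖x‖ + 1 := one_mul _
      show ‖(t ^ 2 : ℝ) • fderiv ℝ h (t • y)‖ ≤ |M|
      calc ‖(t ^ 2 : ℝ) • fderiv ℝ h (t • y)‖ = ‖(t ^ 2 : ℝ)‖ * ‖fderiv ℝ h (t • y)‖ :=
            norm_smul _ _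
        _ ≤ 1 * |M| := by
            apply mul_le_mul _ ((hM _ hmem).trans (le_abs_self M)) (norm_nonneg _) zero_le_one
            rw [Real.norm_eq_abs, abs_le]
            have := ht'.1; have := ht'.2
            constructor <;> nlinarith
        _ = |M| := one_mul _
    · exact intervalIntegrable_const
    · filter_upwards with t ht y hy
      exact hdiff t y
  set L : (ℝ × ℝ) →L[ℝ] ℝ := ∫ t in (0:ℝ)..1, F' x t with hL
  set g : ℝ × ℝ → ℝ := fun y => ∫ t in (0:ℝ)..1, t * h (t • y) with hg
  -- rewrite the vector field
  have hFeq : (fun y : ℝ × ℝ => ∫ ξ in (0:ℝ)..1, (ξ * h (ξ • y)) • y)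
      = fun y => g y • y := by
    funext y
    exact intervalIntegral.integral_smul_const (fun ξ => ξ * h (ξ • y)) y
  have hGF : HasFDerivAt (fun y : ℝ × ℝ => g y • y)
      (g x • ContinuousLinearMap.id ℝ (ℝ × ℝ) + L.smulRight x) x := by
    have := hkey.smul (hasFDerivAt_id x)
    exact this
  have hfder : fderiv ℝ (fun y : ℝ × ℝ => ∫ ξ in (0:ℝ)..1, (ξ * h (ξ • y)) • y) x
      = g x • ContinuousLinearMap.id ℝ (ℝ × ℝ) + L.smulRight x := by
    rw [hFeq]; exact hGF.fderiv
  -- integrability facts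
  have hF'int : IntervalIntegrable (F' x) volume 0 1 := by
    apply Continuous.intervalIntegrable
    exact (continuous_pow 2).smul (hDcont.comp (continuous_id.smul continuous_const))
  have hLapp : ∀ v : ℝ × ℝ, L v = ∫ t in (0:ℝ)..1, t ^ 2 * (fderiv ℝ h (t • x)) v := by
    intro v
    rw [hL, ContinuousLinearMap.intervalIntegral_apply hF'int v]
    simp [hF']
  have hcontD : ∀ v : ℝ × ℝ, Continuous (fun t : ℝ => t ^ 2 * (fderiv ℝ h (t • x)) v) := by
    intro v
    exact (continuous_pow 2).mul
      ((ContinuousLinearMap.apply ℝ ℝ v).continuous.comp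
        (hDcont.comp (continuous_id.smul continuous_const)))
  -- divergence computation
  have hdiv : div2 (fun y => ∫ ξ in (0:ℝ)..1, (ξ * h (ξ • y)) • y) x
      = 2 * g x + (L (1, 0) * x.1 + L (0, 1) * x.2) := by
    rw [div2, hfder]
    simp [ContinuousLinearMap.smulRight_apply, Prod.smul_def, smul_eq_mul]
    ring
  rw [hdiv]
  have h2g : 2 * g x = ∫ t in (0:ℝ)..1, 2 * (t * h (t • x)) := by
    rw [hg, ← intervalIntegral.integral_const_mul]
  have hsum : L (1, 0) * x.1 + L (0, 1) * x.2
      = ∫ t in (0:ℝ)..1, t ^ 2 * (fderiv ℝ h (t • x)) x := by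
    rw [hLapp, hLapp, ← intervalIntegral.integral_mul_const, ← intervalIntegral.integral_mul_const,
      ← intervalIntegral.integral_add
        (((hcontD (1,0)).intervalIntegrable 0 1).mul_const x.1)
        (((hcontD (0,1)).intervalIntegrable 0 1).mul_const x.2)]
    apply intervalIntegral.integral_congr
    intro t _
    have hx : (x : ℝ × ℝ) = x.1 • ((1:ℝ), (0:ℝ)) + x.2 • ((0:ℝ), (1:ℝ)) := by
      simp [Prod.ext_iff]
    calc t ^ 2 * (fderiv ℝ h (t • x)) (1,0) * x.1 + t ^ 2 * (fderiv ℝ h (t • x)) (0,1) * x.2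
        = t ^ 2 * (fderiv ℝ h (t • x)) (x.1 • ((1:ℝ),(0:ℝ)) + x.2 • ((0:ℝ),(1:ℝ))) := by
          simp only [map_add, _root_.map_smul, smul_eq_mul]; ring
      _ = t ^ 2 * (fderiv ℝ h (t • x)) x := by rw [← hx]
  have hc1 : Continuous (fun t : ℝ => 2 * (t * h (t • x))) := by fun_prop
  rw [h2g, hsum, ← intervalIntegral.integral_add
    (hc1.intervalIntegrable _ _) ((hcontD x).intervalIntegrable _ _)]
  -- FTC: the integrand is the derivative of `t ↦ t² h(t • x)`
  have hFTC : ∀ t ∈ Set.uIcc (0:ℝ) 1,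
      HasDerivAt (fun s : ℝ => s ^ 2 * h (s • x))
        (2 * (t * h (t • x)) + t ^ 2 * (fderiv ℝ h (t • x)) x) t := by
    intro t _
    have h1 : HasDerivAt (fun s : ℝ => s ^ 2) (2 * t) t := by
      simpa using (hasDerivAt_pow 2 t)
    have h2 : HasDerivAt (fun s : ℝ => h (s • x)) ((fderiv ℝ h (t • x)) x) t := by
      have hs : HasDerivAt (fun s : ℝ => s • x) x t := by
        simpa using (hasDerivAt_id t).smul_const x
      exact (hd (t • x)).hasFDerivAt.comp_hasDerivAt t hs
    have : HasDerivAt (fun s : ℝ => s ^ 2 * h (s • x))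
        (2 * t * h (t • x) + t ^ 2 * (fderiv ℝ h (t • x)) x) t := h1.mul h2
    convert this using 1
    ring
  have := intervalIntegral.integral_eq_sub_of_hasDerivAt hFTC
    ((hc1.add (hcontD x)).intervalIntegrable _ _)
  rw [this]
  simp
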